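/- The complex Waring rank of the cubic form C = x₀(x₀x₁ + x₂² + x₃² + … + xₙ²) ∈ ℂ[x₀,…,xₙ] is at most 2n+1, i.e., C can be written as a sum of 2n+1 cubes of complex linear forms. -/

import Mathlib

open MvPolynomial Finset
open Fin.NatCast

def IsLinearForm {n : ℕ} (L : MvPolynomial (Fin (n + 1)) ℂ) : Prop :=
  ∃ a : Fin (n + 1) → ℂ, L = ∑ i, C (a i) * X i

noncomputable def wA : ℂ := ((1:ℂ)/6) ^ (((3:ℕ):ℂ))⁻¹
noncomputable def wB : ℂ := (-(1:ℂ)/3) ^ (((3:ℕ):ℂ))⁻¹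
noncomputable def wc (n : ℕ) : ℂ := -(((n:ℂ) - 1)/3)

lemma wA_cube : wA ^ 3 = 1/6 := Complex.cpow_nat_inv_pow _ (by norm_num)
lemma wB_cube : wB ^ 3 = -(1/3) := by
  have := Complex.cpow_nat_inv_pow (-(1:ℂ)/3) (n := 3) (by norm_num)
  rw [wB, this]; ring

noncomputable def wL (n : ℕ) (k : ℕ) : MvPolynomial (Fin (n+1)) ℂ :=
  if k = 0 then C (wA*(1 + wc n)) * X 0 + C wA * X 1
  else if k = 1 then C (wA*(wc n - 1)) * X 0 + C wA * X 1
  else if k = 2 then C (wB * wc n) * X 0 + C wB * X 1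
  else if k % 2 = 1 then C wA * X 0 + C wA * X (((k+1)/2 : ℕ) : Fin (n+1))
  else C wA * X 0 + C (-wA) * X ((k/2 : ℕ) : Fin (n+1))

lemma pair_linear {n : ℕ} (a b : ℂ) (u v : Fin (n+1)) :
    IsLinearForm (C a * X u + C b * X v) := by
  refine ⟨fun i => (if i = u then a else 0) + (if i = v then b else 0), ?_⟩
  simp only [map_add, add_mul, Finset.sum_add_distrib, apply_ite C, map_zero, ite_mul, zero_mul,
    Finset.sum_ite_eq', Finset.mem_univ, if_true]

lemma wL_linear (n k : ℕ) : IsLinearForm (wL n k) := by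
  rw [wL]
  split_ifs <;> apply pair_linear

lemma sum_pairs {M : Type*} [AddCommMonoid M] (f : ℕ → M) :
    ∀ n, 1 ≤ n → ∑ k ∈ Finset.Ico 3 (2*n+1), f k
      = ∑ i ∈ Finset.Ico 2 (n+1), (f (2*i-1) + f (2*i)) := by
  intro n hn
  induction n, hn using Nat.le_induction with
  | base => simp
  | succ n hn ih =>
    have e1 : 2*(n+1)+1 = (2*n+1)+1+1 := by ring
    rw [e1, Finset.sum_Ico_succ_top (show 3 ≤ (2*n+1)+1 by omega),
      Finset.sum_Ico_succ_top (show 3 ≤ 2*n+1 by omega),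
      Finset.sum_Ico_succ_top (show 2 ≤ n+1 by omega) (fun i => f (2*i-1) + f (2*i)), ih]
    have h1 : 2*(n+1)-1 = 2*n+1 := by omega
    have h2 : 2*(n+1) = 2*n+1+1 := by omega
    rw [h1, h2, add_assoc]

theorem stmt_7 (n : ℕ) (hn : 2 ≤ n) :
    ∃ L : Fin (2 * n + 1) → MvPolynomial (Fin (n + 1)) ℂ, (∀ k, IsLinearForm (L k)) ∧
      X 0 * (X 0 * X 1 + ∑ i : Fin (n + 1), if 2 ≤ (i : ℕ) then X i ^ 2 else 0) =
        ∑ k, L k ^ 3 := by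
  refine ⟨fun k => wL n k.val, fun k => wL_linear n k.val, ?_⟩
  -- scalar facts in the polynomial ring
  have h1p : (6 : MvPolynomial (Fin (n+1)) ℂ) * C wA ^ 3 = 1 := by
    have : C (6 * wA ^ 3) = (C 1 : MvPolynomial (Fin (n+1)) ℂ) := by
      rw [wA_cube]; norm_num
    simpa only [map_mul, map_pow, map_one, map_ofNat] using this
  have h2p : (C wB ^ 3 : MvPolynomial (Fin (n+1)) ℂ) = -(2 : _) * C wA ^ 3 := by
    have : C (wB ^ 3) = (C (-2 * wA ^ 3) : MvPolynomial (Fin (n+1)) ℂ) := by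
      rw [wA_cube, wB_cube]; norm_num
    simpa only [map_mul, map_pow, map_neg, map_ofNat] using this
  have h3p : (C (wc n) : MvPolynomial (Fin (n+1)) ℂ)
      = -(2 : _) * C wA ^ 3 * ((n - 1 : ℕ) : MvPolynomial (Fin (n+1)) ℂ) := by
    have hc : wc n = -2 * wA ^ 3 * ((n - 1 : ℕ) : ℂ) := by
      rw [wA_cube, wc, Nat.cast_sub (by omega)]; push_cast; ring
    rw [hc]
    simp only [map_mul, map_pow, map_neg, map_ofNat, map_natCast]
  -- rewrite the target quadric sum
  have hT : (∑ i : Fin (n + 1), if 2 ≤ (i : ℕ) then (X i : MvPolynomial (Fin (n+1)) ℂ) ^ 2 else 0)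
      = ∑ i ∈ Finset.Ico 2 (n+1), (X ((i : ℕ) : Fin (n+1)) : MvPolynomial (Fin (n+1)) ℂ) ^ 2 := by
    have step : ∀ i : Fin (n+1), (if 2 ≤ (i : ℕ) then (X i : MvPolynomial (Fin (n+1)) ℂ) ^ 2 else 0)
        = (fun m : ℕ => if 2 ≤ m then (X ((m : ℕ) : Fin (n+1)) : MvPolynomial (Fin (n+1)) ℂ) ^ 2 else 0) i.val := by
      intro i; simp [Fin.cast_val_eq_self]
    rw [Finset.sum_congr rfl (fun i _ => step i),
      Fin.sum_univ_eq_sum_range (fun m : ℕ => if 2 ≤ m then (X ((m : ℕ) : Fin (n+1)) : MvPolynomial (Fin (n+1)) ℂ) ^ 2 else 0) (n+1), Finset.range_eq_Ico,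
      ← Finset.sum_Ico_consecutive _ (show 0 ≤ 2 by omega) (show 2 ≤ n+1 by omega)]
    rw [Finset.sum_eq_zero (fun i hi => by
      rw [Finset.mem_Ico] at hi; rw [if_neg (by omega)]), zero_add]
    exact Finset.sum_congr rfl (fun i hi => by
      rw [Finset.mem_Ico] at hi; rw [if_pos hi.1])
  rw [hT]
  -- rewrite the RHS sum
  rw [Fin.sum_univ_eq_sum_range (fun k => wL n k ^ 3) (2*n+1), Finset.range_eq_Ico,
    ← Finset.sum_Ico_consecutive _ (show 0 ≤ 3 by omega) (show 3 ≤ 2*n+1 by omega),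
    sum_pairs _ n (by omega)]
  have h03 : ∑ k ∈ Finset.Ico 0 3, wL n k ^ 3 = wL n 0 ^ 3 + wL n 1 ^ 3 + wL n 2 ^ 3 := by
    rw [← Finset.range_eq_Ico]
    rw [Finset.sum_range_succ, Finset.sum_range_succ, Finset.sum_range_one]
  rw [h03]
  have hpair : ∀ i ∈ Finset.Ico 2 (n+1), wL n (2*i-1) ^ 3 + wL n (2*i) ^ 3
      = 2 * C wA ^ 3 * X 0 ^ 3 + X 0 * (X ((i : ℕ) : Fin (n+1)) : MvPolynomial (Fin (n+1)) ℂ) ^ 2 := by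
    intro i hi
    rw [Finset.mem_Ico] at hi
    have hv1 : wL n (2*i-1) = C wA * X 0 + C wA * X ((i : ℕ) : Fin (n+1)) := by
      rw [wL, if_neg (by omega), if_neg (by omega), if_neg (by omega), if_pos (by omega),
        show (2*i-1+1)/2 = i by omega]
    have hv2 : wL n (2*i) = C wA * X 0 + C (-wA) * X ((i : ℕ) : Fin (n+1)) := by
      rw [wL, if_neg (by omega), if_neg (by omega), if_neg (by omega), if_neg (by omega),
        show (2*i)/2 = i by omega]
    rw [hv1, hv2, map_neg]
    linear_combination (X 0 * (X ((i : ℕ) : Fin (n+1)) : MvPolynomial (Fin (n+1)) ℂ) ^ 2) * h1p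
  rw [Finset.sum_congr rfl hpair, Finset.sum_add_distrib, Finset.sum_const, Nat.card_Ico,
    show n + 1 - 2 = n - 1 by omega, nsmul_eq_mul, ← Finset.mul_sum]
  -- head values
  have hv0 : wL n 0 = C (wA*(1 + wc n)) * X 0 + C wA * X 1 := by rw [wL, if_pos rfl]
  have hv1 : wL n 1 = C (wA*(wc n - 1)) * X 0 + C wA * X 1 := by
    rw [wL, if_neg (by omega), if_pos rfl]
  have hv2 : wL n 2 = C (wB * wc n) * X 0 + C wB * X 1 := by
    rw [wL, if_neg (by omega), if_neg (by omega), if_pos rfl]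
  rw [hv0, hv1, hv2]
  simp only [map_mul, map_add, map_sub, map_one]
  linear_combination (-(X 0 ^ 2 * (C (wc n) * X 0 + X 1))) * h1p
    + (-((C (wc n) * X 0 + X 1) ^ 3)) * h2p + (-(X 0 ^ 3)) * h3p
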